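/- Let A, B, X be n×n complex matrices with A and B positive definite, let λ₁,…,λₙ be the eigenvalues of A and ν₁,…,νₙ the eigenvalues of B, and set K̲ = min{ K((λᵢ/νⱼ)^{1/2}, 2) : i, j = 1,…,n }. If 1/2 < v < 1, then ‖(1 − v)AX + vXB‖_F² − v²‖AX − XB‖_F² ≤ K̲^{−r̂₁} ‖A^{1−v} X B^{v}‖_F² − r₁‖A^{1/2} X B^{1/2} − AX‖_F², where r = min{v, 1 − v}, r₁ = min{2r, 1 − 2r} and r̂₁ = min{2r₁, 1 − 2r₁}. -/

import Mathlib

open Matrix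
open scoped ComplexOrder

/-- Real power of a matrix, defined for Hermitian matrices via the spectral
decomposition (functional calculus); junk value otherwise. -/
noncomputable def mrpow {n : ℕ} (A : Matrix (Fin n) (Fin n) ℂ) (t : ℝ) :
    Matrix (Fin n) (Fin n) ℂ :=
  if h : A.IsHermitian then
    (h.eigenvectorUnitary : Matrix (Fin n) (Fin n) ℂ)
      * Matrix.diagonal (fun i => ((h.eigenvalues i ^ t : ℝ) : ℂ))
      * star (h.eigenvectorUnitary : Matrix (Fin n) (Fin n) ℂ)
  else A

/-- The squared Hilbert-Schmidt (Frobenius) norm `‖A‖_F^2`. -/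
noncomputable def frobSq {n : ℕ} (A : Matrix (Fin n) (Fin n) ℂ) : ℝ :=
  ∑ i : Fin n, ∑ j : Fin n, ‖A i j‖ ^ 2

/-- The Kantorovich constant `K(t, 2) = (t + 1)^2 / (4 t)`. -/
noncomputable def Kant (t : ℝ) : ℝ := (t + 1) ^ 2 / (4 * t)

section Helpers

lemma Kant_pos {u : ℝ} (hu : 0 < u) : 0 < Kant u := by
  unfold Kant; positivity

lemma one_le_Kant {u : ℝ} (hu : 0 < u) : 1 ≤ Kant u := by
  rw [Kant, le_div_iff₀ (by positivity)]; nlinarith [sq_nonneg (u - 1)]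

lemma Kant_mul_self {u : ℝ} (hu : 0 < u) : Kant u * u = ((1 + u) / 2) ^ 2 := by
  unfold Kant; field_simp; ring

lemma Kant_inv {t : ℝ} (ht : 0 < t) : Kant t⁻¹ = Kant t := by
  unfold Kant; rw [div_eq_div_iff (by positivity) (by positivity)]; field_simp; ring

/-- ZSF-type Kantorovich–Young: `K(u)^min(m,1-m) * u^m ≤ m u + 1 - m`. -/
lemma lemZ {m u : ℝ} (hm0 : 0 ≤ m) (hm1 : m ≤ 1) (hu : 0 < u) :
    Kant u ^ (min m (1 - m)) * u ^ m ≤ m * u + (1 - m) := by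
  set r := min m (1 - m) with hrdef
  have hrm : r ≤ m := min_le_left _ _
  have hrm1 : r ≤ 1 - m := min_le_right _ _
  have hr0 : 0 ≤ r := le_min (by linarith) (by linarith)
  have hK := Kant_pos hu
  have hup : (0:ℝ) < (1 + u) / 2 := by linarith
  have key : Kant u ^ r * u ^ m
      = ((1 + u) / 2) ^ (2 * r) * u ^ (m - r) := by
    have h1 : u ^ m = u ^ r * u ^ (m - r) := by
      rw [← Real.rpow_add hu]; ring_nf
    rw [h1, ← mul_assoc, ← Real.mul_rpow hK.le hu.le, Kant_mul_self hu,
      ← Real.rpow_natCast ((1 + u) / 2) 2, ← Real.rpow_mul hup.le]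
    norm_num [mul_comm]
  rw [key]
  have hgm := Real.geom_mean_le_arith_mean3_weighted
    (by linarith : (0:ℝ) ≤ 2 * r) (by linarith : (0:ℝ) ≤ m - r)
    (by linarith : (0:ℝ) ≤ 1 - m - r) hup.le hu.le zero_le_one
    (by ring : 2 * r + (m - r) + (1 - m - r) = 1)
  rw [Real.one_rpow, mul_one] at hgm
  calc ((1 + u) / 2) ^ (2 * r) * u ^ (m - r)
      ≤ 2 * r * ((1 + u) / 2) + (m - r) * u + (1 - m - r) * 1 := hgm
    _ = m * u + (1 - m) := by ring

lemma lemA {m t : ℝ} (hm0 : 0 ≤ m) (hm1 : m ≤ 1) (ht : 0 < t) :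
    (1 + m) * t ^ 2 - m * t ≤ Kant t ^ (-(min m (1 - m))) * t ^ (2 + m) := by
  set r := min m (1 - m) with hrdef
  have hu : (0:ℝ) < t⁻¹ := by positivity
  set u := t⁻¹ with hudef
  have htu : t * u = 1 := by rw [hudef]; exact mul_inv_cancel₀ ht.ne'
  have hK : 0 < Kant t := Kant_pos ht
  have hKsym : Kant u = Kant t := Kant_inv ht
  have hRpos : 0 < Kant t ^ (-r) * t ^ (2 + m) := by positivity
  have hlhs : (1 + m) * t ^ 2 - m * t = t ^ 2 * (1 + m - m * u) := by
    rw [hudef]; field_simp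
  rcases le_or_gt (1 + m - m * u) 0 with hb | hb
  · nlinarith [sq_nonneg t, mul_nonpos_of_nonneg_of_nonpos (sq_nonneg t) hb]
  · have hZ := lemZ hm0 hm1 hu
    rw [hKsym] at hZ
    have hKr : 0 < Kant t ^ r := Real.rpow_pos_of_pos hK r
    have hum : 0 < u ^ m := Real.rpow_pos_of_pos hu m
    have htm : 0 < t ^ m := Real.rpow_pos_of_pos ht m
    have htum : t ^ m * u ^ m = 1 := by
      rw [← Real.mul_rpow ht.le hu.le, htu, Real.one_rpow]
    have H : Kant t ^ r * u ^ m * (1 + m - m * u) ≤ 1 := by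
      calc Kant t ^ r * u ^ m * (1 + m - m * u)
          ≤ (m * u + (1 - m)) * (1 + m - m * u) :=
            mul_le_mul_of_nonneg_right hZ hb.le
        _ = 1 - (m * (u - 1)) ^ 2 := by ring
        _ ≤ 1 := by nlinarith [sq_nonneg (m * (u - 1))]
    have hb2 : 1 + m - m * u ≤ (Kant t ^ r)⁻¹ * t ^ m := by
      have hpos : 0 < Kant t ^ r * u ^ m := mul_pos hKr hum
      apply le_of_mul_le_mul_right _ hpos
      calc (1 + m - m * u) * (Kant t ^ r * u ^ m)
          = Kant t ^ r * u ^ m * (1 + m - m * u) := by ring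
        _ ≤ 1 := H
        _ = (Kant t ^ r)⁻¹ * t ^ m * (Kant t ^ r * u ^ m) := by
            rw [show (Kant t ^ r)⁻¹ * t ^ m * (Kant t ^ r * u ^ m)
              = (t ^ m * u ^ m) * ((Kant t ^ r)⁻¹ * Kant t ^ r) from by ring,
              htum, inv_mul_cancel₀ hKr.ne', mul_one]
    have hsplit : t ^ (2 + m) = t ^ 2 * t ^ m := by
      rw [Real.rpow_add ht, Real.rpow_two]
    rw [hlhs, Real.rpow_neg hK.le, hsplit]
    calc t ^ 2 * (1 + m - m * u) ≤ t ^ 2 * ((Kant t ^ r)⁻¹ * t ^ m) :=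
          mul_le_mul_of_nonneg_left hb2 (sq_nonneg t)
      _ = (Kant t ^ r)⁻¹ * (t ^ 2 * t ^ m) := by ring

lemma lemB {m t : ℝ} (hm0 : 0 ≤ m) (hm1 : m ≤ 1) (ht : 0 < t) :
    2 * t ^ 2 - (1 - m) * t - m ≤ Kant t ^ (-(min m (1 - m))) * t ^ (3 + m) := by
  set r := min m (1 - m) with hrdef
  have hu : (0:ℝ) < t⁻¹ := by positivity
  set u := t⁻¹ with hudef
  have htu : t * u = 1 := by rw [hudef]; exact mul_inv_cancel₀ ht.ne'
  have hK : 0 < Kant t := Kant_pos ht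
  have hKsym : Kant u = Kant t := Kant_inv ht
  have hRpos : 0 < Kant t ^ (-r) * t ^ (3 + m) := by positivity
  have hlhs : 2 * t ^ 2 - (1 - m) * t - m = t ^ 2 * (2 - (1 - m) * u - m * u ^ 2) := by
    rw [hudef]; field_simp
  rcases le_or_gt (2 - (1 - m) * u - m * u ^ 2) 0 with hb | hb
  · nlinarith [mul_nonpos_of_nonneg_of_nonpos (sq_nonneg t) hb]
  · have hZ := lemZ hm0 hm1 hu
    rw [hKsym] at hZ
    have hKr : 0 < Kant t ^ r := Real.rpow_pos_of_pos hK r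
    have hum : 0 < u ^ (1 + m) := Real.rpow_pos_of_pos hu _
    have htm : 0 < t ^ (1 + m) := Real.rpow_pos_of_pos ht _
    have htum : t ^ (1 + m) * u ^ (1 + m) = 1 := by
      rw [← Real.mul_rpow ht.le hu.le, htu, Real.one_rpow]
    have husplit : u ^ (1 + m) = u * u ^ m := by
      rw [Real.rpow_add hu, Real.rpow_one]
    have H : Kant t ^ r * u ^ (1 + m) * (2 - (1 - m) * u - m * u ^ 2) ≤ 1 := by
      have h1 : Kant t ^ r * u ^ (1 + m) * (2 - (1 - m) * u - m * u ^ 2)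
          ≤ (m * u + (1 - m)) * (u * (2 - (1 - m) * u - m * u ^ 2)) := by
        rw [husplit]
        calc Kant t ^ r * (u * u ^ m) * (2 - (1 - m) * u - m * u ^ 2)
            = (Kant t ^ r * u ^ m) * (u * (2 - (1 - m) * u - m * u ^ 2)) := by ring
          _ ≤ (m * u + (1 - m)) * (u * (2 - (1 - m) * u - m * u ^ 2)) := by
              apply mul_le_mul_of_nonneg_right hZ
              positivity
      calc Kant t ^ r * u ^ (1 + m) * (2 - (1 - m) * u - m * u ^ 2)
          ≤ (m * u + (1 - m)) * (u * (2 - (1 - m) * u - m * u ^ 2)) := h1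
        _ = 1 - (1 - (1 - m) * u - m * u ^ 2) ^ 2 := by ring
        _ ≤ 1 := by nlinarith [sq_nonneg (1 - (1 - m) * u - m * u ^ 2)]
    have hb2 : 2 - (1 - m) * u - m * u ^ 2 ≤ (Kant t ^ r)⁻¹ * t ^ (1 + m) := by
      have hpos : 0 < Kant t ^ r * u ^ (1 + m) := mul_pos hKr hum
      apply le_of_mul_le_mul_right _ hpos
      calc (2 - (1 - m) * u - m * u ^ 2) * (Kant t ^ r * u ^ (1 + m))
          = Kant t ^ r * u ^ (1 + m) * (2 - (1 - m) * u - m * u ^ 2) := by ring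
        _ ≤ 1 := H
        _ = (Kant t ^ r)⁻¹ * t ^ (1 + m) * (Kant t ^ r * u ^ (1 + m)) := by
            rw [show (Kant t ^ r)⁻¹ * t ^ (1 + m) * (Kant t ^ r * u ^ (1 + m))
              = (t ^ (1 + m) * u ^ (1 + m)) * ((Kant t ^ r)⁻¹ * Kant t ^ r) from by ring,
              htum, inv_mul_cancel₀ hKr.ne', mul_one]
    have hsplit : t ^ (3 + m) = t ^ 2 * t ^ (1 + m) := by
      rw [show (3:ℝ) + m = 2 + (1 + m) by ring, Real.rpow_add ht, Real.rpow_two]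
    rw [hlhs, Real.rpow_neg hK.le, hsplit]
    calc t ^ 2 * (2 - (1 - m) * u - m * u ^ 2)
        ≤ t ^ 2 * ((Kant t ^ r)⁻¹ * t ^ (1 + m)) :=
          mul_le_mul_of_nonneg_left hb2 (sq_nonneg t)
      _ = (Kant t ^ r)⁻¹ * (t ^ 2 * t ^ (1 + m)) := by ring

lemma star_ineq {v r1 rh1 t : ℝ} (hv0 : 1 / 2 < v) (hv : v < 1)
    (hr1 : r1 = min (2 - 2 * v) (2 * v - 1))
    (hrh1 : rh1 = min (2 * r1) (1 - 2 * r1)) (ht : 0 < t) :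
    2 * v * t ^ 2 - (2 * v - 1) + r1 * (t - 1) ^ 2
      ≤ Kant t ^ (-rh1) * t ^ (4 * v) := by
  rcases le_or_gt v (3 / 4) with hc | hc
  · have hr1' : r1 = 2 * v - 1 := by rw [hr1, min_eq_right (by linarith)]
    have hm : rh1 = min (4 * v - 2) (1 - (4 * v - 2)) := by
      rw [hrh1, hr1']; ring_nf
    have h := lemA (m := 4 * v - 2) (by linarith) (by linarith) ht
    rw [show (2:ℝ) + (4 * v - 2) = 4 * v by ring, ← hm] at h
    calc 2 * v * t ^ 2 - (2 * v - 1) + r1 * (t - 1) ^ 2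
        = (1 + (4 * v - 2)) * t ^ 2 - (4 * v - 2) * t := by rw [hr1']; ring
      _ ≤ Kant t ^ (-rh1) * t ^ (4 * v) := h
  · have hr1' : r1 = 2 - 2 * v := by rw [hr1, min_eq_left (by linarith)]
    have hm : rh1 = min (4 * v - 3) (1 - (4 * v - 3)) := by
      rw [hrh1, hr1', show 1 - 2 * (2 - 2 * v) = 4 * v - 3 by ring,
        show 2 * (2 - 2 * v) = 1 - (4 * v - 3) by ring, min_comm]
    have h := lemB (m := 4 * v - 3) (by linarith) (by linarith) ht
    rw [show (3:ℝ) + (4 * v - 3) = 4 * v by ring, ← hm] at h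
    calc 2 * v * t ^ 2 - (2 * v - 1) + r1 * (t - 1) ^ 2
        = 2 * t ^ 2 - (1 - (4 * v - 3)) * t - (4 * v - 3) := by rw [hr1']; ring
      _ ≤ Kant t ^ (-rh1) * t ^ (4 * v) := h

/-- Core two-variable scalar inequality. -/
lemma core_ineq {v r1 rh1 a b : ℝ} (hv0 : 1 / 2 < v) (hv : v < 1)
    (hr1 : r1 = min (2 - 2 * v) (2 * v - 1))
    (hrh1 : rh1 = min (2 * r1) (1 - 2 * r1)) (ha : 0 < a) (hb : 0 < b) :
    ((1 - v) * a + v * b) ^ 2 - v ^ 2 * (a - b) ^ 2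
      ≤ Kant (Real.sqrt (a / b)) ^ (-rh1) * (a ^ (1 - v) * b ^ v) ^ 2
        - r1 * (a ^ ((1:ℝ)/2) * b ^ ((1:ℝ)/2) - a) ^ 2 := by
  have hsa : 0 < Real.sqrt a := Real.sqrt_pos.mpr ha
  have hsb : 0 < Real.sqrt b := Real.sqrt_pos.mpr hb
  set t := Real.sqrt b / Real.sqrt a with htdef
  have ht : 0 < t := by positivity
  have hsb' : Real.sqrt b = t * Real.sqrt a := by rw [htdef]; field_simp
  have ha2 : Real.sqrt a ^ 2 = a := Real.sq_sqrt ha.le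
  have hb2 : Real.sqrt b ^ 2 = b := Real.sq_sqrt hb.le
  have hbat : b = a * t ^ 2 := by
    rw [← ha2, ← hb2, hsb']; ring
  have hKarg : Real.sqrt (a / b) = t⁻¹ := by
    rw [Real.sqrt_div ha.le, htdef, inv_div]
  have hG : (a ^ (1 - v) * b ^ v) ^ 2 = a ^ 2 * t ^ (4 * v) := by
    have hbv : b ^ v = a ^ v * t ^ (2 * v) := by
      rw [hbat, Real.mul_rpow ha.le (sq_nonneg t), ← Real.rpow_natCast t 2,
        ← Real.rpow_mul ht.le]
      norm_num
    have h1 : a ^ (1 - v) * b ^ v = a * t ^ (2 * v) := by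
      rw [hbv, ← mul_assoc, ← Real.rpow_add ha]
      norm_num
    rw [h1, mul_pow, ← Real.rpow_natCast (t ^ (2 * v)) 2, ← Real.rpow_mul ht.le,
      show 2 * v * (2:ℕ) = 4 * v by push_cast; ring]
  have hhalf : a ^ ((1:ℝ)/2) * b ^ ((1:ℝ)/2) = a * t := by
    rw [← Real.sqrt_eq_rpow, ← Real.sqrt_eq_rpow,
      show a * t = a / Real.sqrt a * Real.sqrt b from by rw [htdef]; ring,
      Real.div_sqrt]
  have hS : (a ^ ((1:ℝ)/2) * b ^ ((1:ℝ)/2) - a) ^ 2 = a ^ 2 * (t - 1) ^ 2 := by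
    rw [hhalf]; ring
  have hL : ((1 - v) * a + v * b) ^ 2 - v ^ 2 * (a - b) ^ 2
      = a ^ 2 * (2 * v * t ^ 2 - (2 * v - 1)) := by
    rw [hbat]; ring
  rw [hG, hS, hL, hKarg, Kant_inv ht]
  have hst := star_ineq hv0 hv hr1 hrh1 ht
  nlinarith [mul_le_mul_of_nonneg_left hst (sq_nonneg a)]

lemma frobSq_eq_re_trace {n : ℕ} (M : Matrix (Fin n) (Fin n) ℂ) :
    frobSq M = (Matrix.trace (Mᴴ * M)).re := by
  have key : ∀ j, ((Mᴴ * M) j j).re = ∑ i, ‖M i j‖ ^ 2 := by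
    intro j
    rw [Matrix.mul_apply, Complex.re_sum]
    refine Finset.sum_congr rfl fun i _ => ?_
    rw [Matrix.conjTranspose_apply, Complex.sq_norm, Complex.star_def, mul_comm,
      Complex.mul_conj, Complex.ofReal_re]
  calc frobSq M = ∑ j, ∑ i, ‖M i j‖ ^ 2 := Finset.sum_comm
    _ = ∑ j, ((Mᴴ * M) j j).re := Finset.sum_congr rfl fun j _ => (key j).symm
    _ = (∑ j, (Mᴴ * M) j j).re := (Complex.re_sum _ _).symm
    _ = (Matrix.trace (Mᴴ * M)).re := rfl

lemma frobSq_conj {n : ℕ} (U V M : Matrix (Fin n) (Fin n) ℂ)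
    (hU : star U * U = 1) (hV : star V * V = 1) :
    frobSq (U * M * star V) = frobSq M := by
  simp only [Matrix.star_eq_conjTranspose] at hU hV ⊢
  rw [frobSq_eq_re_trace, frobSq_eq_re_trace]
  have h : (U * M * Vᴴ)ᴴ * (U * M * Vᴴ) = V * (Mᴴ * M) * Vᴴ := by
    rw [conjTranspose_mul, conjTranspose_mul, conjTranspose_conjTranspose]
    calc V * (Mᴴ * Uᴴ) * (U * M * Vᴴ)
        = V * (Mᴴ * ((Uᴴ * U) * (M * Vᴴ))) := by simp only [Matrix.mul_assoc]
      _ = V * (Mᴴ * M) * Vᴴ := by rw [hU, Matrix.one_mul]; simp only [Matrix.mul_assoc]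
  rw [h, Matrix.trace_mul_cycle, ← Matrix.mul_assoc, hV, Matrix.one_mul]

end Helpers

theorem stmt_19 {n : ℕ} (A B X : Matrix (Fin n) (Fin n) ℂ) (v Kmin r r1 rh1 : ℝ)
    (hn : 0 < n) (hA : A.PosDef) (hB : B.PosDef)
    (hK : Kmin = sInf (Set.range fun p : Fin n × Fin n =>
      Kant (Real.sqrt (hA.1.eigenvalues p.1 / hB.1.eigenvalues p.2))))
    (hr : r = min v (1 - v)) (hr1 : r1 = min (2 * r) (1 - 2 * r))
    (hrh1 : rh1 = min (2 * r1) (1 - 2 * r1))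
    (hv0 : 1 / 2 < v) (hv : v < 1) :
    frobSq (((1 - v : ℝ) : ℂ) • (A * X) + ((v : ℝ) : ℂ) • (X * B))
        - v ^ 2 * frobSq (A * X - X * B) ≤
      Kmin ^ (-rh1) * frobSq (mrpow A (1 - v) * X * mrpow B v)
        - r1 * frobSq (mrpow A (1 / 2) * X * mrpow B (1 / 2) - A * X) := by
  have hrv : r = 1 - v := by rw [hr, min_eq_right (by linarith)]
  have hr1' : r1 = min (2 - 2 * v) (2 * v - 1) := by
    rw [hr1, hrv, show (1:ℝ) - 2 * (1 - v) = 2 * v - 1 by ring,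
      show (2:ℝ) * (1 - v) = 2 - 2 * v by ring]
  have hr1_pos : 0 < r1 := by
    rw [hr1']; exact lt_min (by linarith) (by linarith)
  have hr1_half : r1 ≤ 1 / 2 := by
    have h1 : r1 ≤ 2 - 2 * v := hr1' ▸ min_le_left _ _
    have h2 : r1 ≤ 2 * v - 1 := hr1' ▸ min_le_right _ _
    linarith
  have hrh1_0 : 0 ≤ rh1 := by
    rw [hrh1]; exact le_min (by linarith) (by linarith)
  set lam := hA.1.eigenvalues with hlam
  set nu := hB.1.eigenvalues with hnu
  have hlam_pos : ∀ i, 0 < lam i := fun i => hA.eigenvalues_pos i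
  have hnu_pos : ∀ j, 0 < nu j := fun j => hB.eigenvalues_pos j
  set U : Matrix (Fin n) (Fin n) ℂ :=
    (hA.1.eigenvectorUnitary : Matrix (Fin n) (Fin n) ℂ) with hUdef
  set V : Matrix (Fin n) (Fin n) ℂ :=
    (hB.1.eigenvectorUnitary : Matrix (Fin n) (Fin n) ℂ) with hVdef
  have hUU : U * star U = 1 := mem_unitaryGroup_iff.mp hA.1.eigenvectorUnitary.2
  have hUU' : star U * U = 1 := mem_unitaryGroup_iff'.mp hA.1.eigenvectorUnitary.2
  have hVV : V * star V = 1 := mem_unitaryGroup_iff.mp hB.1.eigenvectorUnitary.2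
  have hVV' : star V * V = 1 := mem_unitaryGroup_iff'.mp hB.1.eigenvectorUnitary.2
  set Y := star U * X * V with hYdef
  have hX : X = U * Y * star V := by
    rw [hYdef,
      show U * (star U * X * V) * star V = (U * star U) * X * (V * star V) from by
        simp only [Matrix.mul_assoc],
      hUU, hVV, Matrix.one_mul, Matrix.mul_one]
  set Dc : Matrix (Fin n) (Fin n) ℂ := diagonal (fun i => ((lam i : ℝ) : ℂ)) with hDc
  set Ec : Matrix (Fin n) (Fin n) ℂ := diagonal (fun j => ((nu j : ℝ) : ℂ)) with hEc
  have cancelU : ∀ Z : Matrix (Fin n) (Fin n) ℂ, star U * (U * Z) = Z := fun Z => by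
    rw [← Matrix.mul_assoc, hUU', Matrix.one_mul]
  have cancelV : ∀ Z : Matrix (Fin n) (Fin n) ℂ, star V * (V * Z) = Z := fun Z => by
    rw [← Matrix.mul_assoc, hVV', Matrix.one_mul]
  have hAspec : A = U * Dc * star U := hA.1.spectral_theorem
  have hBspec : B = V * Ec * star V := hB.1.spectral_theorem
  have hmrA : ∀ s : ℝ,
      mrpow A s = U * diagonal (fun i => ((lam i ^ s : ℝ) : ℂ)) * star U := by
    intro s; unfold mrpow; rw [dif_pos hA.1]
  have hmrB : ∀ s : ℝ,
      mrpow B s = V * diagonal (fun j => ((nu j ^ s : ℝ) : ℂ)) * star V := by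
    intro s; unfold mrpow; rw [dif_pos hB.1]
  have hAX : A * X = U * (Dc * Y) * star V := by
    rw [hAspec, hX]; simp only [Matrix.mul_assoc]; rw [cancelU]
  have hXB : X * B = U * (Y * Ec) * star V := by
    rw [hBspec, hX]; simp only [Matrix.mul_assoc]; rw [cancelV]
  have hM3 : mrpow A (1 - v) * X * mrpow B v
      = U * (diagonal (fun i => ((lam i ^ (1 - v) : ℝ) : ℂ)) *
          (Y * diagonal (fun j => ((nu j ^ v : ℝ) : ℂ)))) * star V := by
    rw [hmrA, hmrB, hX]; simp only [Matrix.mul_assoc]; rw [cancelU, cancelV]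
  have hM4 : mrpow A (1 / 2) * X * mrpow B (1 / 2)
      = U * (diagonal (fun i => ((lam i ^ ((1:ℝ) / 2) : ℝ) : ℂ)) *
          (Y * diagonal (fun j => ((nu j ^ ((1:ℝ) / 2) : ℝ) : ℂ)))) * star V := by
    rw [hmrA, hmrB, hX]; simp only [Matrix.mul_assoc]; rw [cancelU, cancelV]
  have hT1 : ((1 - v : ℝ) : ℂ) • (A * X) + ((v : ℝ) : ℂ) • (X * B)
      = U * (((1 - v : ℝ) : ℂ) • (Dc * Y) + ((v : ℝ) : ℂ) • (Y * Ec)) * star V := by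
    rw [hAX, hXB]
    simp only [Matrix.mul_add, Matrix.add_mul, Matrix.mul_smul, Matrix.smul_mul]
  have hT2 : A * X - X * B = U * (Dc * Y - Y * Ec) * star V := by
    rw [hAX, hXB]; simp only [Matrix.mul_sub, Matrix.sub_mul]
  have hT4 : mrpow A (1 / 2) * X * mrpow B (1 / 2) - A * X
      = U * (diagonal (fun i => ((lam i ^ ((1:ℝ) / 2) : ℝ) : ℂ)) *
          (Y * diagonal (fun j => ((nu j ^ ((1:ℝ) / 2) : ℝ) : ℂ))) - Dc * Y) * star V := by
    rw [hM4, hAX]; simp only [Matrix.mul_sub, Matrix.sub_mul]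
  rw [hT1, hT2, hM3, hT4, frobSq_conj _ _ _ hUU' hVV', frobSq_conj _ _ _ hUU' hVV',
    frobSq_conj _ _ _ hUU' hVV', frobSq_conj _ _ _ hUU' hVV']
  unfold frobSq
  simp only [Finset.mul_sum]
  rw [← Finset.sum_sub_distrib, ← Finset.sum_sub_distrib]
  refine Finset.sum_le_sum fun i _ => ?_
  rw [← Finset.sum_sub_distrib, ← Finset.sum_sub_distrib]
  refine Finset.sum_le_sum fun j _ => ?_
  simp only [Matrix.add_apply, Matrix.sub_apply, Matrix.smul_apply, Matrix.diagonal_mul,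
    Matrix.mul_diagonal, smul_eq_mul, hDc, hEc]
  have e1 : ((1 - v : ℝ) : ℂ) * ((lam i : ℂ) * Y i j) + ((v : ℝ) : ℂ) * (Y i j * (nu j : ℂ))
      = ((((1 - v) * lam i + v * nu j : ℝ)) : ℂ) * Y i j := by push_cast; ring
  have e2 : (lam i : ℂ) * Y i j - Y i j * (nu j : ℂ)
      = (((lam i - nu j : ℝ)) : ℂ) * Y i j := by push_cast; ring
  have e3 : ((lam i ^ (1 - v) : ℝ) : ℂ) * (Y i j * ((nu j ^ v : ℝ) : ℂ))
      = (((lam i ^ (1 - v) * nu j ^ v : ℝ)) : ℂ) * Y i j := by push_cast; ring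
  have e4 : ((lam i ^ ((1:ℝ) / 2) : ℝ) : ℂ) * (Y i j * ((nu j ^ ((1:ℝ) / 2) : ℝ) : ℂ))
        - (lam i : ℂ) * Y i j
      = (((lam i ^ ((1:ℝ) / 2) * nu j ^ ((1:ℝ) / 2) - lam i : ℝ)) : ℂ) * Y i j := by
    push_cast; ring
  rw [e1, e2, e3, e4]
  simp only [norm_mul, Complex.norm_real, Real.norm_eq_abs, mul_pow, _root_.sq_abs]
  set a := lam i with hadef
  set b := nu j with hbdef
  set w := ‖Y i j‖ ^ 2 with hwdef
  have hw : 0 ≤ w := by positivity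
  have ha : 0 < a := hlam_pos i
  have hb : 0 < b := hnu_pos j
  have hcore := core_ineq (a := a) (b := b) hv0 hv hr1' hrh1 ha hb
  have hKle : Kmin ≤ Kant (Real.sqrt (a / b)) := by
    rw [hK]
    refine csInf_le ⟨1, ?_⟩ ⟨(i, j), rfl⟩
    rintro x ⟨p, rfl⟩
    exact one_le_Kant (Real.sqrt_pos.mpr (div_pos (hlam_pos p.1) (hnu_pos p.2)))
  have hK1 : (1:ℝ) ≤ Kmin := by
    rw [hK]
    refine le_csInf ⟨_, ⟨(⟨0, hn⟩, ⟨0, hn⟩), rfl⟩⟩ ?_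
    rintro x ⟨p, rfl⟩
    exact one_le_Kant (Real.sqrt_pos.mpr (div_pos (hlam_pos p.1) (hnu_pos p.2)))
  have hKmin_pos : 0 < Kmin := lt_of_lt_of_le one_pos hK1
  have hmono : Kant (Real.sqrt (a / b)) ^ (-rh1) ≤ Kmin ^ (-rh1) :=
    Real.rpow_le_rpow_of_nonpos hKmin_pos hKle (neg_nonpos.mpr hrh1_0)
  have hfinal : ((1 - v) * a + v * b) ^ 2 - v ^ 2 * (a - b) ^ 2
      ≤ Kmin ^ (-rh1) * (a ^ (1 - v) * b ^ v) ^ 2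
        - r1 * (a ^ ((1:ℝ)/2) * b ^ ((1:ℝ)/2) - a) ^ 2 := by
    have h3 : Kant (Real.sqrt (a / b)) ^ (-rh1) * (a ^ (1 - v) * b ^ v) ^ 2
        ≤ Kmin ^ (-rh1) * (a ^ (1 - v) * b ^ v) ^ 2 :=
      mul_le_mul_of_nonneg_right hmono (by positivity)
    linarith
  nlinarith [mul_le_mul_of_nonneg_right hfinal hw]
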